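/- arXiv:1905.05451 — 8 statements merged into one kernel-verified Lean document; each statement's English description precedes it below -/
import Mathlib

section
/- Let S be a finite set, let Q : S × S → ℝ satisfy Q(x,y) ≥ 0 for all x ≠ y, and let T > 0. Suppose σ : S → ℝ → ℝ satisfies σ(x,t) > 0 for all x ∈ S, t ∈ [0,T] and satisfies the backward equation with rates Q, i.e. for every x and every t ∈ [0,T], d/dt σ(x,t) = − ∑_{y ≠ x} Q(x,y) (σ(y,t) − σ(x,t)). Suppose p : S → ℝ → ℝ satisfies the master equation with rates Q, i.e. for every x and t ∈ [0,T], d/dt p(x,t) = ∑_{y ≠ x} Q(y,x) p(y,t) − ∑_{y ≠ x} Q(x,y) p(x,t). Define the posterior rates Q̃(x,y,t) = (σ(y,t)/σ(x,t)) Q(x,y). Then the unnormalized smoothed weights ρ(x,t) := p(x,t) σ(x,t) satisfy the master equation with rates Q̃: for every x and t ∈ [0,T], d/dt ρ(x,t) = ∑_{y ≠ x} Q̃(y,x,t) ρ(y,t) − ∑_{y ≠ x} Q̃(x,y,t) ρ(x,t). -/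
open Finset

/-- The smoothed process of a Markov jump process is again a Markov jump process
with posterior rates `Q̃(x,y,t) = (σ(y,t)/σ(x,t)) Q(x,y)`:  if `σ` solves the
backward equation and `p` solves the master equation with rates `Q`, then the
unnormalized smoothed weights `ρ(x,t) = p(x,t) σ(x,t)` solve the master equation
with rates `Q̃`. -/
theorem smoothed_weights_satisfy_posterior_master_equation
    {S : Type*} [Fintype S] [DecidableEq S]
    (Q : S → S → ℝ) (hQ : ∀ x y : S, x ≠ y → 0 ≤ Q x y)
    (T : ℝ) (hT : 0 < T)
    (σ p : S → ℝ → ℝ)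
    (hσpos : ∀ x : S, ∀ t ∈ Set.Icc (0 : ℝ) T, 0 < σ x t)
    (hbackward : ∀ x : S, ∀ t ∈ Set.Icc (0 : ℝ) T,
      HasDerivAt (σ x)
        (-∑ y ∈ univ.filter (fun y => y ≠ x), Q x y * (σ y t - σ x t)) t)
    (hmaster : ∀ x : S, ∀ t ∈ Set.Icc (0 : ℝ) T,
      HasDerivAt (p x)
        ((∑ y ∈ univ.filter (fun y => y ≠ x), Q y x * p y t)
          - ∑ y ∈ univ.filter (fun y => y ≠ x), Q x y * p x t) t)
    (Qt : S → S → ℝ → ℝ)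
    (hQt : ∀ x y : S, ∀ t : ℝ, Qt x y t = (σ y t / σ x t) * Q x y)
    (ρ : S → ℝ → ℝ)
    (hρ : ∀ x : S, ∀ t : ℝ, ρ x t = p x t * σ x t) :
    ∀ x : S, ∀ t ∈ Set.Icc (0 : ℝ) T,
      HasDerivAt (ρ x)
        ((∑ y ∈ univ.filter (fun y => y ≠ x), Qt y x t * ρ y t)
          - ∑ y ∈ univ.filter (fun y => y ≠ x), Qt x y t * ρ x t) t := by
  intro x t ht
  have hfun : ρ x = fun s => p x s * σ x s := funext (hρ x)
  have hd := (hmaster x t ht).mul (hbackward x t ht)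
  rw [hfun]
  convert hd using 1
  case e'_4 => rfl
  case e'_5 => rfl
  case e'_8 => rfl
  have h1 : ∀ y ∈ univ.filter (fun y => y ≠ x),
      Qt y x t * ρ y t = Q y x * p y t * σ x t := by
    intro y hy
    rw [hQt, hρ]
    have hy' := (hσpos y t ht).ne'
    field_simp
  have h2 : ∀ y ∈ univ.filter (fun y => y ≠ x),
      Qt x y t * (p x t * σ x t) = Q x y * p x t * σ y t := by
    intro y hy
    rw [hQt]
    have hx' := (hσpos x t ht).ne'
    field_simp
  beta_reduce
  rw [Finset.sum_congr rfl h1, Finset.sum_congr rfl h2,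
    sub_mul, Finset.sum_mul, Finset.sum_mul, mul_neg, Finset.mul_sum,
    ← Finset.sum_sub_distrib, ← sub_eq_add_neg, ← Finset.sum_sub_distrib, ← Finset.sum_sub_distrib]
  exact Finset.sum_congr rfl fun y hy => by ring
end

section
/- Let S be a finite set, let Q : S × S → ℝ satisfy Q(x,y) ≥ 0 for x ≠ y, and let T > 0. Suppose σ : S → ℝ → ℝ is positive on S × [0,T] and satisfies the backward equation with rates Q, p : S → ℝ → ℝ is nonnegative, not identically zero at each time, and satisfies the master equation with rates Q (as in the previous statements). Define the normalized smoothed distribution p̃(x,t) := p(x,t) σ(x,t) / (∑_{y ∈ S} p(y,t) σ(y,t)), assuming the denominator is positive. Then p̃ satisfies the master equation with the posterior rates Q̃(x,y,t) = (σ(y,t)/σ(x,t)) Q(x,y): for every x and t ∈ [0,T], d/dt p̃(x,t) = ∑_{y ≠ x} Q̃(y,x,t) p̃(y,t) − ∑_{y ≠ x} Q̃(x,y,t) p̃(x,t). -/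
open Finset

/-- The normalized smoothed distribution
`p̃(x,t) = p(x,t) σ(x,t) / ∑_y p(y,t) σ(y,t)` satisfies the master equation with
the posterior rates `Q̃(x,y,t) = (σ(y,t)/σ(x,t)) Q(x,y)`. -/
theorem normalized_smoothed_distribution_satisfies_posterior_master_equation
    {S : Type*} [Fintype S] [DecidableEq S]
    (Q : S → S → ℝ) (hQ : ∀ x y : S, x ≠ y → 0 ≤ Q x y)
    (T : ℝ) (hT : 0 < T)
    (σ p : S → ℝ → ℝ)
    (hσpos : ∀ x : S, ∀ t ∈ Set.Icc (0 : ℝ) T, 0 < σ x t)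
    (hppos : ∀ x : S, ∀ t ∈ Set.Icc (0 : ℝ) T, 0 ≤ p x t)
    (hpnontriv : ∀ t ∈ Set.Icc (0 : ℝ) T, ∃ x : S, p x t ≠ 0)
    (hbackward : ∀ x : S, ∀ t ∈ Set.Icc (0 : ℝ) T,
      HasDerivAt (σ x)
        (-∑ y ∈ univ.filter (fun y => y ≠ x), Q x y * (σ y t - σ x t)) t)
    (hmaster : ∀ x : S, ∀ t ∈ Set.Icc (0 : ℝ) T,
      HasDerivAt (p x)
        ((∑ y ∈ univ.filter (fun y => y ≠ x), Q y x * p y t)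
          - ∑ y ∈ univ.filter (fun y => y ≠ x), Q x y * p x t) t)
    (hden : ∀ t ∈ Set.Icc (0 : ℝ) T, 0 < ∑ y : S, p y t * σ y t)
    (Qt : S → S → ℝ → ℝ)
    (hQt : ∀ x y : S, ∀ t : ℝ, Qt x y t = (σ y t / σ x t) * Q x y)
    (ptil : S → ℝ → ℝ)
    (hptil : ∀ x : S, ∀ t : ℝ,
      ptil x t = p x t * σ x t / ∑ y : S, p y t * σ y t) :
    ∀ x : S, ∀ t ∈ Set.Icc (0 : ℝ) T,
      HasDerivAt (ptil x)
        ((∑ y ∈ univ.filter (fun y => y ≠ x), Qt y x t * ptil y t)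
          - ∑ y ∈ univ.filter (fun y => y ≠ x), Qt x y t * ptil x t) t := by
  intro x t ht
  have hNpos := hden t ht
  have hNne : (∑ y : S, p y t * σ y t) ≠ 0 := ne_of_gt hNpos
  have hσne : ∀ y : S, σ y t ≠ 0 := fun y => (hσpos y t ht).ne'
  -- derivative of each product p y * σ y
  have hprod : ∀ y : S, HasDerivAt (fun s => p y s * σ y s)
      (((∑ z ∈ univ.filter (fun z => z ≠ y), Q z y * p z t)
        - ∑ z ∈ univ.filter (fun z => z ≠ y), Q y z * p y t) * σ y t
       + p y t * (-∑ z ∈ univ.filter (fun z => z ≠ y), Q y z * (σ z t - σ y t))) t :=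
    fun y => (hmaster y t ht).mul (hbackward y t ht)
  -- simplification of each derivative
  have hsimp : ∀ (y : S),
      ((∑ z ∈ univ.filter (fun z => z ≠ y), Q z y * p z t)
        - ∑ z ∈ univ.filter (fun z => z ≠ y), Q y z * p y t) * σ y t
       + p y t * (-∑ z ∈ univ.filter (fun z => z ≠ y), Q y z * (σ z t - σ y t))
      = ∑ z ∈ univ.filter (fun z => z ≠ y),
          (Q z y * p z t * σ y t - Q y z * p y t * σ z t) := by
    intro y
    have h1 : p y t * (∑ z ∈ univ.filter (fun z => z ≠ y), Q y z * (σ z t - σ y t))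
        = (∑ z ∈ univ.filter (fun z => z ≠ y), Q y z * p y t * σ z t)
          - ∑ z ∈ univ.filter (fun z => z ≠ y), Q y z * p y t * σ y t := by
      rw [Finset.mul_sum, ← Finset.sum_sub_distrib]
      exact Finset.sum_congr rfl fun z _ => by ring
    have h2 : (∑ z ∈ univ.filter (fun z => z ≠ y), Q z y * p z t) * σ y t
        = ∑ z ∈ univ.filter (fun z => z ≠ y), Q z y * p z t * σ y t :=
      Finset.sum_mul _ _ _
    have h3 : (∑ z ∈ univ.filter (fun z => z ≠ y), Q y z * p y t) * σ y t
        = ∑ z ∈ univ.filter (fun z => z ≠ y), Q y z * p y t * σ y t :=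
      Finset.sum_mul _ _ _
    rw [Finset.sum_sub_distrib, sub_mul, h2, h3, mul_neg, h1]
    ring
  -- the normalization has zero derivative
  have hzero : ∑ y : S,
      (((∑ z ∈ univ.filter (fun z => z ≠ y), Q z y * p z t)
        - ∑ z ∈ univ.filter (fun z => z ≠ y), Q y z * p y t) * σ y t
       + p y t * (-∑ z ∈ univ.filter (fun z => z ≠ y), Q y z * (σ z t - σ y t)))
      = 0 := by
    rw [Finset.sum_congr rfl (fun y _ => hsimp y)]
    have hext : ∀ y : S, ∑ z ∈ univ.filter (fun z => z ≠ y),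
        (Q z y * p z t * σ y t - Q y z * p y t * σ z t)
      = ∑ z : S, (Q z y * p z t * σ y t - Q y z * p y t * σ z t) := by
      intro y
      apply Finset.sum_subset (Finset.filter_subset _ _)
      intro z _ hz
      simp only [Finset.mem_filter, Finset.mem_univ, true_and, not_not] at hz
      subst hz; ring
    rw [Finset.sum_congr rfl (fun y _ => hext y)]
    have hT2 : (∑ y : S, ∑ z : S, (Q z y * p z t * σ y t - Q y z * p y t * σ z t))
        = - ∑ y : S, ∑ z : S, (Q z y * p z t * σ y t - Q y z * p y t * σ z t) := by
      calc (∑ y : S, ∑ z : S, (Q z y * p z t * σ y t - Q y z * p y t * σ z t))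
          = ∑ z : S, ∑ y : S, (Q z y * p z t * σ y t - Q y z * p y t * σ z t) :=
            Finset.sum_comm
        _ = ∑ z : S, ∑ y : S, -(Q y z * p y t * σ z t - Q z y * p z t * σ y t) := by
            exact Finset.sum_congr rfl fun z _ => Finset.sum_congr rfl fun y _ => by ring
        _ = - ∑ y : S, ∑ z : S, (Q z y * p z t * σ y t - Q y z * p y t * σ z t) := by
            simp only [Finset.sum_neg_distrib]
    linarith
  have hNderiv : HasDerivAt (fun s => ∑ y : S, p y s * σ y s) 0 t := by
    have h := HasDerivAt.fun_sum (fun y (_ : y ∈ (univ : Finset S)) => hprod y)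
    rwa [hzero] at h
  have hdiv := (hprod x).fun_div hNderiv hNne
  have hfun : ptil x = fun s => p x s * σ x s / ∑ y : S, p y s * σ y s :=
    funext (hptil x)
  rw [hfun]
  convert hdiv using 1
  · rfl
  · rfl
  simp only [hQt, hptil]
  have eL : ∀ y ∈ univ.filter (fun y => y ≠ x),
      σ x t / σ y t * Q y x * (p y t * σ y t / ∑ z : S, p z t * σ z t)
      = Q y x * p y t * σ x t / ∑ z : S, p z t * σ z t := by
    intro y hy
    field_simp [hσne y, hNne]
  have eR : ∀ y ∈ univ.filter (fun y => y ≠ x),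
      σ y t / σ x t * Q x y * (p x t * σ x t / ∑ z : S, p z t * σ z t)
      = Q x y * p x t * σ y t / ∑ z : S, p z t * σ z t := by
    intro y hy
    field_simp [hσne x, hNne]
  rw [Finset.sum_congr rfl eL, Finset.sum_congr rfl eR, ← Finset.sum_div,
    ← Finset.sum_div, hsimp x, Finset.sum_sub_distrib]
  field_simp
  rw [mul_zero, sub_zero]
  congr 2
  · exact Finset.sum_congr rfl fun y _ => by ring
  · exact Finset.sum_congr rfl fun y _ => by ring
end

section
/- Let S be a finite set, T > 0, and let Q : S × S → ℝ satisfy Q(x,y) > 0 for all x ≠ y. Suppose σ : S → ℝ → ℝ is positive on S × [0,T] and satisfies the backward equation with rates Q. Suppose p : S → ℝ → ℝ satisfies the master equation with the time-dependent rates λ : S × S × [0,T] → ℝ, where λ(x,y,t) > 0 for x ≠ y. Define the posterior rates Q̃(x,y,t) = (σ(y,t)/σ(x,t)) Q(x,y). Then for every t ∈ [0,T], the Kullback–Leibler integrands satisfy the decomposition: ∑_{x} p(x,t) ∑_{y ≠ x} [ Q̃(x,y,t) − λ(x,y,t) + λ(x,y,t) · log( λ(x,y,t) / Q̃(x,y,t)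 ) ] = ∑_{x} p(x,t) ∑_{y ≠ x} [ Q(x,y) − λ(x,y,t) + λ(x,y,t) · log( λ(x,y,t) / Q(x,y) ) ] − d/dt ( ∑_{x} p(x,t) · log σ(x,t) ). -/
open Finset

lemma swap_filter_sum {S : Type*} [Fintype S] [DecidableEq S] (F : S → S → ℝ) :
    ∑ x : S, ∑ y ∈ univ.filter (fun y => y ≠ x), F x y
      = ∑ x : S, ∑ y ∈ univ.filter (fun y => y ≠ x), F y x := by
  simp only [Finset.sum_filter]
  rw [Finset.sum_comm]
  exact Finset.sum_congr rfl fun x _ => Finset.sum_congr rfl fun y _ => by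
    rcases eq_or_ne x y with h | h
    · simp [h]
    · simp [h, h.symm]

/-- Pointwise-in-time core of the KL-divergence decomposition
`KL(P^Z ‖ P^posterior) = KL(P^Z ‖ P^prior) − d/dt E[log σ(Z(t),t)]`:
the KL integrand towards the posterior rates `Q̃(x,y,t) = (σ(y,t)/σ(x,t)) Q(x,y)`
equals the KL integrand towards the prior rates `Q` minus the time derivative of
`∑_x p(x,t) log σ(x,t)`. -/
theorem kl_integrand_decomposition
    {S : Type*} [Fintype S] [DecidableEq S]
    (Q : S → S → ℝ) (hQ : ∀ x y : S, x ≠ y → 0 < Q x y)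
    (T : ℝ) (hT : 0 < T)
    (σ p : S → ℝ → ℝ) (lam : S → S → ℝ → ℝ)
    (hσpos : ∀ x : S, ∀ t ∈ Set.Icc (0 : ℝ) T, 0 < σ x t)
    (hlampos : ∀ x y : S, x ≠ y → ∀ t ∈ Set.Icc (0 : ℝ) T, 0 < lam x y t)
    (hbackward : ∀ x : S, ∀ t ∈ Set.Icc (0 : ℝ) T,
      HasDerivAt (σ x)
        (-∑ y ∈ univ.filter (fun y => y ≠ x), Q x y * (σ y t - σ x t)) t)
    (hmaster : ∀ x : S, ∀ t ∈ Set.Icc (0 : ℝ) T,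
      HasDerivAt (p x)
        ((∑ y ∈ univ.filter (fun y => y ≠ x), lam y x t * p y t)
          - ∑ y ∈ univ.filter (fun y => y ≠ x), lam x y t * p x t) t)
    (Qt : S → S → ℝ → ℝ)
    (hQt : ∀ x y : S, ∀ t : ℝ, Qt x y t = (σ y t / σ x t) * Q x y) :
    ∀ t ∈ Set.Icc (0 : ℝ) T,
      (∑ x : S, p x t * ∑ y ∈ univ.filter (fun y => y ≠ x),
          (Qt x y t - lam x y t + lam x y t * Real.log (lam x y t / Qt x y t)))
        = (∑ x : S, p x t * ∑ y ∈ univ.filter (fun y => y ≠ x),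
            (Q x y - lam x y t + lam x y t * Real.log (lam x y t / Q x y)))
          - deriv (fun s => ∑ x : S, p x s * Real.log (σ x s)) t := by
  intro t ht
  have hσne : ∀ x : S, σ x t ≠ 0 := fun x => (hσpos x t ht).ne'
  -- derivative of the expected log-likelihood
  have hder : ∀ x : S, HasDerivAt (fun s => p x s * Real.log (σ x s))
      (((∑ y ∈ univ.filter (fun y => y ≠ x), lam y x t * p y t)
          - ∑ y ∈ univ.filter (fun y => y ≠ x), lam x y t * p x t) * Real.log (σ x t)
        + p x t * ((-∑ y ∈ univ.filter (fun y => y ≠ x), Q x y * (σ y t - σ x t)) / σ x t)) t :=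
    fun x => (hmaster x t ht).mul ((hbackward x t ht).log (hσne x))
  have hD : deriv (fun s => ∑ x : S, p x s * Real.log (σ x s)) t
      = ∑ x : S, (((∑ y ∈ univ.filter (fun y => y ≠ x), lam y x t * p y t)
          - ∑ y ∈ univ.filter (fun y => y ≠ x), lam x y t * p x t) * Real.log (σ x t)
        + p x t * ((-∑ y ∈ univ.filter (fun y => y ≠ x), Q x y * (σ y t - σ x t)) / σ x t)) :=
    (HasDerivAt.fun_sum (fun x _ => hder x)).deriv
  rw [hD]
  -- per-term rewriting of the posterior KL integrand
  have hA : ∀ x : S, ∀ y ∈ univ.filter (fun y => y ≠ x),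
      Qt x y t - lam x y t + lam x y t * Real.log (lam x y t / Qt x y t)
        = (Q x y - lam x y t + lam x y t * Real.log (lam x y t / Q x y))
          + (Qt x y t - Q x y)
          + (lam x y t * Real.log (σ x t) - lam x y t * Real.log (σ y t)) := by
    intro x y hy
    have hxy : x ≠ y := (Finset.mem_filter.mp hy).2.symm
    have hQp := hQ x y hxy
    have hlam := hlampos x y hxy t ht
    have hlog : Real.log (lam x y t / Qt x y t)
        = Real.log (lam x y t / Q x y) + Real.log (σ x t) - Real.log (σ y t) := by
      rw [hQt, Real.log_div hlam.ne'
          (mul_pos (div_pos (hσpos y t ht) (hσpos x t ht)) hQp).ne',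
        Real.log_mul (div_ne_zero (hσne y) (hσne x)) hQp.ne',
        Real.log_div (hσne y) (hσne x), Real.log_div hlam.ne' hQp.ne']
      ring
    rw [hlog]; ring
  -- the backward-equation term matches the Qt − Q contribution
  have keyC : ∀ x : S,
      p x t * ((-∑ y ∈ univ.filter (fun y => y ≠ x), Q x y * (σ y t - σ x t)) / σ x t)
        = - ∑ y ∈ univ.filter (fun y => y ≠ x), p x t * (Qt x y t - Q x y) := by
    intro x
    rw [neg_div, mul_neg, Finset.sum_div, Finset.mul_sum, neg_inj]
    refine Finset.sum_congr rfl fun y hy => ?_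
    rw [hQt]
    field_simp [hσne x]
    try ring
  -- the master-equation term matches the log σ contribution
  have key : ∑ x : S, ∑ y ∈ univ.filter (fun y => y ≠ x),
        (p x t * lam x y t * Real.log (σ x t) - p x t * lam x y t * Real.log (σ y t))
      = - ∑ x : S, ((∑ y ∈ univ.filter (fun y => y ≠ x), lam y x t * p y t)
          - ∑ y ∈ univ.filter (fun y => y ≠ x), lam x y t * p x t) * Real.log (σ x t) := by
    have hs := swap_filter_sum (fun x y => p x t * lam x y t * Real.log (σ y t))
    simp only [Finset.sum_sub_distrib] at *
    rw [hs, ← Finset.sum_neg_distrib, ← Finset.sum_sub_distrib]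
    refine Finset.sum_congr rfl fun x _ => ?_
    rw [sub_mul, Finset.sum_mul, Finset.sum_mul, neg_sub]
    congr 1 <;> exact Finset.sum_congr rfl fun y _ => by ring
  -- put everything together
  calc ∑ x : S, p x t * ∑ y ∈ univ.filter (fun y => y ≠ x),
          (Qt x y t - lam x y t + lam x y t * Real.log (lam x y t / Qt x y t))
      = ∑ x : S, (p x t * (∑ y ∈ univ.filter (fun y => y ≠ x),
            (Q x y - lam x y t + lam x y t * Real.log (lam x y t / Q x y)))
          + (∑ y ∈ univ.filter (fun y => y ≠ x), p x t * (Qt x y t - Q x y))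
          + ∑ y ∈ univ.filter (fun y => y ≠ x),
              (p x t * lam x y t * Real.log (σ x t) - p x t * lam x y t * Real.log (σ y t))) := by
        refine Finset.sum_congr rfl fun x _ => ?_
        rw [Finset.sum_congr rfl (hA x), Finset.sum_add_distrib, Finset.sum_add_distrib,
          mul_add, mul_add]
        congr 1
        · congr 1
          exact Finset.mul_sum _ _ _
        · rw [Finset.mul_sum]
          exact Finset.sum_congr rfl fun y _ => by ring
    _ = (∑ x : S, p x t * ∑ y ∈ univ.filter (fun y => y ≠ x),
            (Q x y - lam x y t + lam x y t * Real.log (lam x y t / Q x y)))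
        + (∑ x : S, ∑ y ∈ univ.filter (fun y => y ≠ x), p x t * (Qt x y t - Q x y))
        + ∑ x : S, ∑ y ∈ univ.filter (fun y => y ≠ x),
            (p x t * lam x y t * Real.log (σ x t) - p x t * lam x y t * Real.log (σ y t)) := by
        rw [Finset.sum_add_distrib, Finset.sum_add_distrib]
    _ = _ := by
        rw [key, Finset.sum_add_distrib]
        rw [Finset.sum_congr rfl (fun x _ => keyC x), Finset.sum_neg_distrib]
        ring
end

section
/- Let S be a finite set, let 0 ≤ a < b ≤ T, and let Q : S × S → ℝ satisfy Q(x,y) > 0 for all x ≠ y. Suppose σ : S → ℝ → ℝ is positive and satisfies the backward equation with rates Q on [a,b], and p : S → ℝ → ℝ satisfies the master equation on [a,b] with time-dependent rates λ(x,y,t) > 0 (for x ≠ y), with all relevant functions continuously differentiable in t on [a,b]. Define Q̃(x,y,t) = (σ(y,t)/σ(x,t)) Q(x,y). Then ∫_a^b ∑_{x} p(x,t) ∑_{y ≠ x} [ Q̃(x,y,t) − λ(x,y,t) + λ(x,y,t) log( λ(x,y,t)/Q̃(x,y,t) ) ] dt = ∫_a^b ∑_{x} p(x,t) ∑_{y ≠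 x} [ Q(x,y) − λ(x,y,t) + λ(x,y,t) log( λ(x,y,t)/Q(x,y) ) ] dt − ( ∑_{x} p(x,b) log σ(x,b) − ∑_{x} p(x,a) log σ(x,a) ). -/
open Finset

private lemma sum_pairs_swap' {S : Type*} [Fintype S] [DecidableEq S] (f : S → S → ℝ) :
    ∑ x : S, ∑ y ∈ univ.filter (fun y => y ≠ x), f x y
      = ∑ x : S, ∑ y ∈ univ.filter (fun y => y ≠ x), f y x := by
  simp only [Finset.sum_filter]
  rw [Finset.sum_comm]
  refine Finset.sum_congr rfl fun x _ => Finset.sum_congr rfl fun y _ => ?_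
  by_cases h : x = y
  · simp [h]
  · simp [h, Ne.symm h]

/-- Integral form (over an interval `[a,b]` between consecutive observations) of
the KL-divergence decomposition between an approximating jump process with rates
`λ`, the prior process with rates `Q`, and the posterior process with rates
`Q̃(x,y,t) = (σ(y,t)/σ(x,t)) Q(x,y)`. -/
theorem kl_decomposition_integral_form
    {S : Type*} [Fintype S] [DecidableEq S]
    (T a b : ℝ) (ha : 0 ≤ a) (hab : a < b) (hbT : b ≤ T)
    (Q : S → S → ℝ) (hQ : ∀ x y : S, x ≠ y → 0 < Q x y)
    (σ p : S → ℝ → ℝ) (lam : S → S → ℝ → ℝ)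
    (hσpos : ∀ x : S, ∀ t ∈ Set.Icc a b, 0 < σ x t)
    (hlampos : ∀ x y : S, x ≠ y → ∀ t ∈ Set.Icc a b, 0 < lam x y t)
    (hσC1 : ∀ x : S, ContDiffOn ℝ 1 (σ x) (Set.Icc a b))
    (hpC1 : ∀ x : S, ContDiffOn ℝ 1 (p x) (Set.Icc a b))
    (hlamC1 : ∀ x y : S, ContDiffOn ℝ 1 (lam x y) (Set.Icc a b))
    (hbackward : ∀ x : S, ∀ t ∈ Set.Icc a b,
      HasDerivAt (σ x)
        (-∑ y ∈ univ.filter (fun y => y ≠ x), Q x y * (σ y t - σ x t)) t)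
    (hmaster : ∀ x : S, ∀ t ∈ Set.Icc a b,
      HasDerivAt (p x)
        ((∑ y ∈ univ.filter (fun y => y ≠ x), lam y x t * p y t)
          - ∑ y ∈ univ.filter (fun y => y ≠ x), lam x y t * p x t) t)
    (Qt : S → S → ℝ → ℝ)
    (hQt : ∀ x y : S, ∀ t : ℝ, Qt x y t = (σ y t / σ x t) * Q x y) :
    (∫ t in a..b, ∑ x : S, p x t * ∑ y ∈ univ.filter (fun y => y ≠ x),
        (Qt x y t - lam x y t + lam x y t * Real.log (lam x y t / Qt x y t)))
      = (∫ t in a..b, ∑ x : S, p x t * ∑ y ∈ univ.filter (fun y => y ≠ x),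
          (Q x y - lam x y t + lam x y t * Real.log (lam x y t / Q x y)))
        - ((∑ x : S, p x b * Real.log (σ x b))
            - ∑ x : S, p x a * Real.log (σ x a)) := by
  have hab' : a ≤ b := hab.le
  have huIcc : Set.uIcc a b = Set.Icc a b := Set.uIcc_of_le hab'
  set G : ℝ → ℝ := fun t => ∑ x : S,
      (((∑ y ∈ univ.filter (fun y => y ≠ x), lam y x t * p y t)
          - ∑ y ∈ univ.filter (fun y => y ≠ x), lam x y t * p x t) * Real.log (σ x t)
        + p x t * ((-∑ y ∈ univ.filter (fun y => y ≠ x), Q x y * (σ y t - σ x t)) / σ x t))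
    with hG
  have hσc : ∀ x, ContinuousOn (σ x) (Set.Icc a b) := fun x => (hσC1 x).continuousOn
  have hpc : ∀ x, ContinuousOn (p x) (Set.Icc a b) := fun x => (hpC1 x).continuousOn
  have hlamc : ∀ x y, ContinuousOn (lam x y) (Set.Icc a b) :=
    fun x y => (hlamC1 x y).continuousOn
  have hσne : ∀ x, ∀ t ∈ Set.Icc a b, σ x t ≠ 0 := fun x t ht => (hσpos x t ht).ne'
  -- derivative of F t = ∑ x, p x t * log (σ x t)
  have hderiv : ∀ t ∈ Set.uIcc a b,
      HasDerivAt (fun t => ∑ x : S, p x t * Real.log (σ x t)) (G t) t := by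
    intro t ht
    rw [huIcc] at ht
    exact HasDerivAt.fun_sum fun x _ =>
      (hmaster x t ht).mul ((hbackward x t ht).log (hσne x t ht))
  -- continuity of G
  have hGc : ContinuousOn G (Set.Icc a b) := by
    apply continuousOn_finset_sum
    intro x _
    apply ContinuousOn.add
    · exact ((continuousOn_finset_sum _ fun y _ => (hlamc y x).mul (hpc y)).sub
        (continuousOn_finset_sum _ fun y _ => (hlamc x y).mul (hpc x))).mul
        ((hσc x).log (hσne x))
    · exact (hpc x).mul
        (ContinuousOn.div
          ((continuousOn_finset_sum _ fun y _ =>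
            continuousOn_const.mul ((hσc y).sub (hσc x))).neg)
          (hσc x) (hσne x))
  have hGint : IntervalIntegrable G MeasureTheory.volume a b := by
    apply ContinuousOn.intervalIntegrable
    rw [huIcc]; exact hGc
  -- continuity/integrability of the prior integrand
  have hI2c : ContinuousOn (fun t => ∑ x : S, p x t * ∑ y ∈ univ.filter (fun y => y ≠ x),
      (Q x y - lam x y t + lam x y t * Real.log (lam x y t / Q x y))) (Set.Icc a b) := by
    apply continuousOn_finset_sum
    intro x _
    apply (hpc x).mul
    apply continuousOn_finset_sum
    intro y hy
    have hy' : x ≠ y := ((Finset.mem_filter.mp hy).2).symm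
    have hQxy : (0:ℝ) < Q x y := hQ x y hy'
    refine (continuousOn_const.sub (hlamc x y)).add ((hlamc x y).mul
      (ContinuousOn.log ((hlamc x y).div_const _) ?_))
    intro t ht
    exact div_ne_zero (hlampos x y hy' t ht).ne' hQxy.ne'
  have hI2int : IntervalIntegrable (fun t => ∑ x : S, p x t *
      ∑ y ∈ univ.filter (fun y => y ≠ x),
        (Q x y - lam x y t + lam x y t * Real.log (lam x y t / Q x y)))
      MeasureTheory.volume a b := by
    apply ContinuousOn.intervalIntegrable
    rw [huIcc]; exact hI2c
  -- key pointwise identity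
  have key : ∀ t ∈ Set.Icc a b,
      (∑ x : S, p x t * ∑ y ∈ univ.filter (fun y => y ≠ x),
        (Q x y - lam x y t + lam x y t * Real.log (lam x y t / Q x y)))
      - (∑ x : S, p x t * ∑ y ∈ univ.filter (fun y => y ≠ x),
        (Qt x y t - lam x y t + lam x y t * Real.log (lam x y t / Qt x y t)))
      = G t := by
    intro t ht
    have hL : (∑ x : S, p x t * ∑ y ∈ univ.filter (fun y => y ≠ x),
          (Q x y - lam x y t + lam x y t * Real.log (lam x y t / Q x y)))
        - (∑ x : S, p x t * ∑ y ∈ univ.filter (fun y => y ≠ x),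
          (Qt x y t - lam x y t + lam x y t * Real.log (lam x y t / Qt x y t)))
        = ∑ x : S, ∑ y ∈ univ.filter (fun y => y ≠ x),
            (lam x y t * p x t * Real.log (σ y t) - lam x y t * p x t * Real.log (σ x t)
              + p x t * (Q x y - σ y t / σ x t * Q x y)) := by
      rw [← Finset.sum_sub_distrib]
      refine Finset.sum_congr rfl fun x _ => ?_
      rw [← mul_sub, ← Finset.sum_sub_distrib, Finset.mul_sum]
      refine Finset.sum_congr rfl fun y hy => ?_
      have hy' : x ≠ y := ((Finset.mem_filter.mp hy).2).symm
      have hlam := hlampos x y hy' t ht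
      have hσx := hσpos x t ht
      have hσy := hσpos y t ht
      have hQxy := hQ x y hy'
      have e1 : Real.log (lam x y t / Q x y)
          = Real.log (lam x y t) - Real.log (Q x y) :=
        Real.log_div hlam.ne' hQxy.ne'
      have e2 : Real.log (lam x y t / (σ y t / σ x t * Q x y))
          = Real.log (lam x y t)
            - (Real.log (σ y t) - Real.log (σ x t) + Real.log (Q x y)) := by
        rw [Real.log_div hlam.ne' (by positivity),
          Real.log_mul (by positivity) hQxy.ne', Real.log_div hσy.ne' hσx.ne']
      rw [hQt x y t, e1, e2]
      ring
    have hP : ∀ x : S,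
        p x t * ((-∑ y ∈ univ.filter (fun y => y ≠ x), Q x y * (σ y t - σ x t)) / σ x t)
          = ∑ y ∈ univ.filter (fun y => y ≠ x),
              p x t * (Q x y - σ y t / σ x t * Q x y) := by
      intro x
      rw [← Finset.sum_neg_distrib, Finset.sum_div, Finset.mul_sum]
      refine Finset.sum_congr rfl fun y _ => ?_
      have hσx := hσne x t ht
      field_simp
      ring
    have hsw : ∑ x : S, ∑ y ∈ univ.filter (fun y => y ≠ x),
          lam y x t * p y t * Real.log (σ x t)
        = ∑ x : S, ∑ y ∈ univ.filter (fun y => y ≠ x),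
          lam x y t * p x t * Real.log (σ y t) :=
      (sum_pairs_swap' fun x y => lam x y t * p x t * Real.log (σ y t)).symm
    have hG' : G t = ∑ x : S, ∑ y ∈ univ.filter (fun y => y ≠ x),
        (lam x y t * p x t * Real.log (σ y t) - lam x y t * p x t * Real.log (σ x t)
          + p x t * (Q x y - σ y t / σ x t * Q x y)) := by
      simp only [hG]
      simp only [sub_mul, Finset.sum_mul, hP]
      simp only [Finset.sum_add_distrib, Finset.sum_sub_distrib]
      rw [hsw]
    rw [hL, hG']
  -- FTC
  have hFTC : (∫ t in a..b, G t)
      = (∑ x : S, p x b * Real.log (σ x b)) - ∑ x : S, p x a * Real.log (σ x a) :=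
    intervalIntegral.integral_eq_sub_of_hasDerivAt hderiv hGint
  have hcong : (∫ t in a..b, ∑ x : S, p x t * ∑ y ∈ univ.filter (fun y => y ≠ x),
        (Qt x y t - lam x y t + lam x y t * Real.log (lam x y t / Qt x y t)))
      = ∫ t in a..b, ((∑ x : S, p x t * ∑ y ∈ univ.filter (fun y => y ≠ x),
          (Q x y - lam x y t + lam x y t * Real.log (lam x y t / Q x y))) - G t) := by
    apply intervalIntegral.integral_congr
    intro t ht
    rw [huIcc] at ht
    have := key t ht
    dsimp only
    linarith
  rw [hcong, intervalIntegral.integral_sub hI2int hGint, hFTC]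
end

section
/- Let S be a finite set, let c : S → Fin s be a surjective labelling (defining the state-space partition Π_i = c⁻¹{i}), and let Q : S × S → ℝ with Q(x,y) ≥ 0 for x ≠ y. Assume the lumpability condition: there exists Q̃ : Fin s → Fin s → ℝ such that for all i ≠ j and every x with c(x) = i, ∑_{y : c(y) = j} Q(x,y) = Q̃(i,j). Let λ : Fin s → Fin s → ℝ → ℝ, and suppose p : S → ℝ → ℝ satisfies the master equation with the time-dependent rates R(x,y,t) = λ(c(x), c(y), t) · Q(x,y) for x ≠ y. Define the lumped probabilities s_i(t) = ∑_{x : c(x) = i} p(x,t). Then for every i and t: d/dt s_i(t) = ∑_{l ≠ i} λ(l,i,t) · Q̃(l,i) · s_l(t) − ∑_{l ≠ i} λ(i,l,t) · Q̃(i,l) · s_i(t); that is, the lumped probabilities satisfy the master equation of the lumped chain with rates λ(i,j,t) Q̃(i,j). -/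
open Finset

/-- Under the lumpability condition, the lumped probabilities
`s_i(t) = ∑_{x : c(x)=i} p(x,t)` of the variational process with rates
`λ(c(x),c(y),t) Q(x,y)` satisfy the master equation of the lumped chain with
rates `λ(i,j,t) Q̃(i,j)`. -/
theorem lumped_probabilities_satisfy_lumped_master_equation
    {S : Type*} [Fintype S] [DecidableEq S]
    {s : ℕ} (c : S → Fin s) (hc : Function.Surjective c)
    (Q : S → S → ℝ) (hQ : ∀ x y : S, x ≠ y → 0 ≤ Q x y)
    (Qlump : Fin s → Fin s → ℝ)
    (hlumpable : ∀ i j : Fin s, i ≠ j → ∀ x : S, c x = i →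
      (∑ y ∈ univ.filter (fun y => c y = j), Q x y) = Qlump i j)
    (lam : Fin s → Fin s → ℝ → ℝ)
    (p : S → ℝ → ℝ)
    (hmaster : ∀ x : S, ∀ t : ℝ,
      HasDerivAt (p x)
        ((∑ y ∈ univ.filter (fun y => y ≠ x), lam (c y) (c x) t * Q y x * p y t)
          - ∑ y ∈ univ.filter (fun y => y ≠ x), lam (c x) (c y) t * Q x y * p x t) t)
    (slump : Fin s → ℝ → ℝ)
    (hslump : ∀ i : Fin s, ∀ t : ℝ,
      slump i t = ∑ x ∈ univ.filter (fun x => c x = i), p x t) :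
    ∀ i : Fin s, ∀ t : ℝ,
      HasDerivAt (slump i)
        ((∑ l ∈ univ.filter (fun l => l ≠ i), lam l i t * Qlump l i * slump l t)
          - ∑ l ∈ univ.filter (fun l => l ≠ i), lam i l t * Qlump i l * slump i t) t := by
  intro i t
  classical
  set A : Finset S := univ.filter (fun x => c x = i) with hA
  set Ac : Finset S := univ.filter (fun y => ¬ c y = i) with hAc
  -- fibers of classes l ≠ i inside Ac equal the full fibers
  have hfiberEq : ∀ l : Fin s, l ≠ i →
      Ac.filter (fun y => c y = l) = univ.filter (fun y => c y = l) := by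
    intro l hl
    ext z
    simp only [hAc, mem_filter, mem_univ, true_and]
    constructor
    · rintro ⟨_, h⟩; exact h
    · intro h; exact ⟨fun hz => hl (h ▸ hz ▸ rfl), h⟩
  -- decompose the gain term of the master equation for x ∈ A
  have h1 : ∀ x ∈ A,
      (∑ y ∈ univ.filter (fun y => y ≠ x), lam (c y) (c x) t * Q y x * p y t)
        = (∑ y ∈ A, lam i i t * Q y x * p y t)
          + (∑ y ∈ Ac, lam (c y) i t * Q y x * p y t)
          - lam i i t * Q x x * p x t := by
    intro x hx
    have hcx : c x = i := (mem_filter.mp hx).2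
    rw [filter_ne', Finset.sum_erase_eq_sub (mem_univ x),
      ← Finset.sum_filter_add_sum_filter_not univ (fun y => c y = i)
        (fun y => lam (c y) (c x) t * Q y x * p y t), hcx]
    congr 2
    refine sum_congr rfl fun y hy => ?_
    rw [(mem_filter.mp hy).2]
  -- decompose the loss term of the master equation for x ∈ A
  have h2 : ∀ x ∈ A,
      (∑ y ∈ univ.filter (fun y => y ≠ x), lam (c x) (c y) t * Q x y * p x t)
        = (∑ y ∈ A, lam i i t * Q x y * p x t)
          + (∑ y ∈ Ac, lam i (c y) t * Q x y * p x t)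
          - lam i i t * Q x x * p x t := by
    intro x hx
    have hcx : c x = i := (mem_filter.mp hx).2
    rw [filter_ne', Finset.sum_erase_eq_sub (mem_univ x),
      ← Finset.sum_filter_add_sum_filter_not univ (fun y => c y = i)
        (fun y => lam (c x) (c y) t * Q x y * p x t), hcx]
    congr 2
    refine sum_congr rfl fun y hy => ?_
    rw [(mem_filter.mp hy).2]
  -- intra-class double sums are equal (relabel the pair)
  have hintra : (∑ x ∈ A, ∑ y ∈ A, lam i i t * Q y x * p y t)
      = ∑ x ∈ A, ∑ y ∈ A, lam i i t * Q x y * p x t :=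
    Finset.sum_comm
  -- cross gain term collapses via lumpability
  have hgain : (∑ x ∈ A, ∑ y ∈ Ac, lam (c y) i t * Q y x * p y t)
      = ∑ l ∈ univ.filter (fun l => l ≠ i),
          lam l i t * Qlump l i * ∑ y ∈ univ.filter (fun y => c y = l), p y t := by
    rw [Finset.sum_comm]
    have hmaps : ∀ y ∈ Ac, c y ∈ univ.filter (fun l => l ≠ i) := by
      intro y hy
      exact mem_filter.mpr ⟨mem_univ _, (mem_filter.mp hy).2⟩
    rw [← Finset.sum_fiberwise_of_maps_to hmaps
      (fun y => ∑ x ∈ A, lam (c y) i t * Q y x * p y t)]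
    refine sum_congr rfl fun l hl => ?_
    have hl' : l ≠ i := (mem_filter.mp hl).2
    rw [hfiberEq l hl', Finset.mul_sum]
    refine sum_congr rfl fun y hy => ?_
    have hcy : c y = l := (mem_filter.mp hy).2
    have hQl : (∑ x ∈ A, Q y x) = Qlump l i := by
      rw [hA]; exact hlumpable l i hl' y hcy
    calc (∑ x ∈ A, lam (c y) i t * Q y x * p y t)
        = lam l i t * (∑ x ∈ A, Q y x) * p y t := by
          rw [Finset.mul_sum, Finset.sum_mul]
          exact sum_congr rfl fun x _ => by rw [hcy]
      _ = lam l i t * Qlump l i * p y t := by rw [hQl]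
  -- cross loss term collapses via lumpability
  have hloss : (∑ x ∈ A, ∑ y ∈ Ac, lam i (c y) t * Q x y * p x t)
      = ∑ l ∈ univ.filter (fun l => l ≠ i),
          lam i l t * Qlump i l * ∑ x ∈ A, p x t := by
    have hx1 : ∀ x ∈ A, (∑ y ∈ Ac, lam i (c y) t * Q x y * p x t)
        = (∑ l ∈ univ.filter (fun l => l ≠ i), lam i l t * Qlump i l) * p x t := by
      intro x hx
      have hcx : c x = i := (mem_filter.mp hx).2
      have hmaps : ∀ y ∈ Ac, c y ∈ univ.filter (fun l => l ≠ i) := by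
        intro y hy
        exact mem_filter.mpr ⟨mem_univ _, (mem_filter.mp hy).2⟩
      rw [← Finset.sum_fiberwise_of_maps_to hmaps
        (fun y => lam i (c y) t * Q x y * p x t), Finset.sum_mul]
      refine sum_congr rfl fun l hl => ?_
      have hl' : l ≠ i := (mem_filter.mp hl).2
      have hQl : (∑ y ∈ univ.filter (fun y => c y = l), Q x y) = Qlump i l :=
        hlumpable i l (fun h => hl' h.symm) x hcx
      rw [hfiberEq l hl']
      calc (∑ y ∈ univ.filter (fun y => c y = l), lam i (c y) t * Q x y * p x t)
          = lam i l t * (∑ y ∈ univ.filter (fun y => c y = l), Q x y) * p x t := by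
            rw [Finset.mul_sum, Finset.sum_mul]
            refine sum_congr rfl fun y hy => by rw [(mem_filter.mp hy).2]
        _ = lam i l t * Qlump i l * p x t := by rw [hQl]
    calc (∑ x ∈ A, ∑ y ∈ Ac, lam i (c y) t * Q x y * p x t)
        = ∑ x ∈ A, (∑ l ∈ univ.filter (fun l => l ≠ i), lam i l t * Qlump i l) * p x t :=
          sum_congr rfl hx1
      _ = (∑ l ∈ univ.filter (fun l => l ≠ i), lam i l t * Qlump i l) * ∑ x ∈ A, p x t := by
          rw [Finset.mul_sum]
      _ = ∑ l ∈ univ.filter (fun l => l ≠ i), lam i l t * Qlump i l * ∑ x ∈ A, p x t := by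
          rw [Finset.sum_mul]
  -- the key algebraic identity
  have key : (∑ x ∈ A,
        ((∑ y ∈ univ.filter (fun y => y ≠ x), lam (c y) (c x) t * Q y x * p y t)
          - ∑ y ∈ univ.filter (fun y => y ≠ x), lam (c x) (c y) t * Q x y * p x t))
      = (∑ l ∈ univ.filter (fun l => l ≠ i),
            lam l i t * Qlump l i * ∑ y ∈ univ.filter (fun y => c y = l), p y t)
        - ∑ l ∈ univ.filter (fun l => l ≠ i),
            lam i l t * Qlump i l * ∑ x ∈ A, p x t := by
    calc (∑ x ∈ A,
        ((∑ y ∈ univ.filter (fun y => y ≠ x), lam (c y) (c x) t * Q y x * p y t)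
          - ∑ y ∈ univ.filter (fun y => y ≠ x), lam (c x) (c y) t * Q x y * p x t))
        = ∑ x ∈ A,
            (((∑ y ∈ A, lam i i t * Q y x * p y t)
              - ∑ y ∈ A, lam i i t * Q x y * p x t)
            + ((∑ y ∈ Ac, lam (c y) i t * Q y x * p y t)
              - ∑ y ∈ Ac, lam i (c y) t * Q x y * p x t)) := by
          refine sum_congr rfl fun x hx => ?_
          rw [h1 x hx, h2 x hx]; ring
      _ = ((∑ x ∈ A, ∑ y ∈ A, lam i i t * Q y x * p y t)
            - ∑ x ∈ A, ∑ y ∈ A, lam i i t * Q x y * p x t)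
          + ((∑ x ∈ A, ∑ y ∈ Ac, lam (c y) i t * Q y x * p y t)
            - ∑ x ∈ A, ∑ y ∈ Ac, lam i (c y) t * Q x y * p x t) := by
          rw [Finset.sum_add_distrib, Finset.sum_sub_distrib, Finset.sum_sub_distrib]
      _ = (∑ x ∈ A, ∑ y ∈ Ac, lam (c y) i t * Q y x * p y t)
            - ∑ x ∈ A, ∑ y ∈ Ac, lam i (c y) t * Q x y * p x t := by
          rw [hintra]; ring
      _ = _ := by rw [hgain, hloss]
  -- conclude via termwise differentiation
  have hd : HasDerivAt (fun τ => ∑ x ∈ A, p x τ)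
      ((∑ l ∈ univ.filter (fun l => l ≠ i),
            lam l i t * Qlump l i * ∑ y ∈ univ.filter (fun y => c y = l), p y t)
        - ∑ l ∈ univ.filter (fun l => l ≠ i),
            lam i l t * Qlump i l * ∑ x ∈ A, p x t) t := by
    rw [← key]
    exact HasDerivAt.fun_sum fun x _ => hmaster x t
  have hfun : slump i = fun τ => ∑ x ∈ A, p x τ := funext fun τ => hslump i τ
  rw [hfun]
  have e1 : ∀ l : Fin s, slump l t = ∑ y ∈ univ.filter (fun y => c y = l), p y t :=
    fun l => hslump l t
  simp only [e1]
  exact hd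
end

section
/- Let d, r ∈ ℕ, and consider a population-type jump process on the lattice ℤ^d with change vectors v₁, …, v_r ∈ ℤ^d (pairwise distinct and nonzero) and affine propensities h_j(x) = β_j + ⟨α_j, x⟩ for α_j ∈ ℝ^d, β_j ∈ ℝ. Let λ₁, …, λ_r : ℝ → ℝ, and suppose p : ℤ^d → ℝ → ℝ satisfies the master equation with rates R(x, x+v_j, t) = λ_j(t) h_j(x) (and R(x,y,t) = 0 if y − x is not one of the v_j): for every x and t, d/dt p(x,t) = ∑_{j=1}^r λ_j(t) h_j(x − v_j) p(x − v_j, t) − ∑_{j=1}^r λ_j(t) h_j(x) p(x,t). Assume for each t: (i) ∑_x |p(x,t)| · (1 + |h_i(x)|)·(1 + |h_j(x)|) < ∞ for all i, j; (ii) the natural moments φ_i(t) := ∑_x h_i(x) p(x,t) are differentiable with d/dt φ_i(t) = ∑_x h_i(x) ∂_t p(x,t). Then the moment equations are closed: for every i and t, d/dt φ_i(t) = ∑_{j=1}^r λ_j(t) · ⟨α_i, v_j⟩ · φ_j(t). -/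
open Finset

/-- For a population-type jump process on `ℤ^d` with change vectors `v_j` and
affine propensities `h_j(x) = β_j + ⟨α_j, x⟩`, the natural moment functions
`φ_i(t) = ∑_x h_i(x) p(x,t)` satisfy the closed system of moment equations
`d/dt φ_i(t) = ∑_j λ_j(t) ⟨α_i, v_j⟩ φ_j(t)`. -/
theorem affine_propensities_moment_equations_closed
    (d r : ℕ)
    (v : Fin r → (Fin d → ℤ))
    (hv_distinct : Function.Injective v) (hv_ne : ∀ j : Fin r, v j ≠ 0)
    (α : Fin r → (Fin d → ℝ)) (β : Fin r → ℝ)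
    (h : Fin r → (Fin d → ℤ) → ℝ)
    (hh : ∀ j : Fin r, ∀ x : Fin d → ℤ,
      h j x = β j + ∑ k : Fin d, α j k * (x k : ℝ))
    (lam : Fin r → ℝ → ℝ)
    (p p' : (Fin d → ℤ) → ℝ → ℝ)
    (hp' : ∀ x : Fin d → ℤ, ∀ t : ℝ, HasDerivAt (p x) (p' x t) t)
    (hmaster : ∀ x : Fin d → ℤ, ∀ t : ℝ,
      p' x t = (∑ j : Fin r, lam j t * h j (x - v j) * p (x - v j) t)
        - ∑ j : Fin r, lam j t * h j x * p x t)
    (hsummable : ∀ t : ℝ, ∀ i j : Fin r,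
      Summable (fun x : Fin d → ℤ =>
        |p x t| * (1 + |h i x|) * (1 + |h j x|)))
    (φ : Fin r → ℝ → ℝ)
    (hφ : ∀ i : Fin r, ∀ t : ℝ, φ i t = ∑' x : Fin d → ℤ, h i x * p x t)
    (hφderiv : ∀ i : Fin r, ∀ t : ℝ,
      HasDerivAt (φ i) (∑' x : Fin d → ℤ, h i x * p' x t) t) :
    ∀ i : Fin r, ∀ t : ℝ,
      HasDerivAt (φ i)
        (∑ j : Fin r, lam j t * (∑ k : Fin d, α i k * (v j k : ℝ)) * φ j t) t := by

  intro i t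
  set c : Fin r → ℝ := fun j => ∑ k : Fin d, α i k * (v j k : ℝ) with hc
  have haff : ∀ (j : Fin r) (x : Fin d → ℤ), h i (x + v j) = h i x + c j := by
    intro j x
    rw [hh, hh]
    simp only [hc, Pi.add_apply, Int.cast_add, mul_add, Finset.sum_add_distrib]
    ring
  have hA : ∀ j : Fin r, Summable (fun x : Fin d → ℤ => h j x * p x t) := by
    intro j
    apply Summable.of_abs
    refine Summable.of_nonneg_of_le (fun x => abs_nonneg _) (fun x => ?_) (hsummable t j j)
    rw [abs_mul]
    nlinarith [mul_nonneg (abs_nonneg (p x t)) (abs_nonneg (h j x)),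
      mul_nonneg (mul_nonneg (abs_nonneg (p x t)) (abs_nonneg (h j x))) (abs_nonneg (h j x)),
      abs_nonneg (p x t)]
  have hB : ∀ j : Fin r, Summable (fun x : Fin d → ℤ => h i x * (h j x * p x t)) := by
    intro j
    apply Summable.of_abs
    refine Summable.of_nonneg_of_le (fun x => abs_nonneg _) (fun x => ?_) (hsummable t i j)
    rw [abs_mul, abs_mul]
    nlinarith [abs_nonneg (h i x), abs_nonneg (h j x), abs_nonneg (p x t)]
  have hC : ∀ j : Fin r, Summable (fun x : Fin d → ℤ => h i (x + v j) * (h j x * p x t)) := by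
    intro j
    apply Summable.of_abs
    refine Summable.of_nonneg_of_le (fun x => abs_nonneg _) (fun x => ?_)
      ((hsummable t i j).mul_left (1 + |c j|))
    rw [haff j x, abs_mul, abs_mul]
    have h1 : |h i x + c j| ≤ |h i x| + |c j| := abs_add_le _ _
    nlinarith [mul_le_mul_of_nonneg_right h1 (mul_nonneg (abs_nonneg (h j x)) (abs_nonneg (p x t))),
      mul_nonneg (abs_nonneg (p x t)) (abs_nonneg (h i x)),
      mul_nonneg (abs_nonneg (p x t)) (abs_nonneg (h j x)),
      mul_nonneg (abs_nonneg (c j)) (abs_nonneg (p x t)),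
      mul_nonneg (mul_nonneg (abs_nonneg (c j)) (abs_nonneg (p x t))) (abs_nonneg (h i x)),
      mul_nonneg (mul_nonneg (mul_nonneg (abs_nonneg (c j)) (abs_nonneg (p x t))) (abs_nonneg (h i x))) (abs_nonneg (h j x)),
      abs_nonneg (p x t)]
  have hC' : ∀ j : Fin r,
      Summable (fun x : Fin d → ℤ => h i x * (h j (x - v j) * p (x - v j) t)) := by
    intro j
    refine (Equiv.summable_iff (Equiv.addRight (v j))).mp ?_
    simpa [Function.comp_def, Equiv.coe_addRight, add_sub_cancel_right] using hC j
  have hshift : ∀ j : Fin r,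
      (∑' x : Fin d → ℤ, h i x * (h j (x - v j) * p (x - v j) t))
        = (∑' x : Fin d → ℤ, h i (x + v j) * (h j x * p x t)) := by
    intro j
    rw [← Equiv.tsum_eq (Equiv.addRight (v j))
      (fun x : Fin d → ℤ => h i x * (h j (x - v j) * p (x - v j) t))]
    simp [Equiv.coe_addRight, add_sub_cancel_right]
  have key : (∑' x : Fin d → ℤ, h i x * p' x t)
      = ∑ j : Fin r, lam j t * c j * φ j t := by
    have step1 : (∑' x : Fin d → ℤ, h i x * p' x t)
        = ∑' x : Fin d → ℤ, ∑ j : Fin r,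
            lam j t * (h i x * (h j (x - v j) * p (x - v j) t)
              - h i x * (h j x * p x t)) := by
      refine tsum_congr fun x => ?_
      rw [hmaster x t, mul_sub, Finset.mul_sum, Finset.mul_sum, ← Finset.sum_sub_distrib]
      exact Finset.sum_congr rfl fun j _ => by ring
    rw [step1, Summable.tsum_finsetSum (fun j _ => (((hC' j).sub (hB j)).mul_left (lam j t)))]
    refine Finset.sum_congr rfl fun j _ => ?_
    rw [tsum_mul_left, Summable.tsum_sub (hC' j) (hB j), hshift j]
    have : (∑' x : Fin d → ℤ, h i (x + v j) * (h j x * p x t))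
        = (∑' x : Fin d → ℤ, h i x * (h j x * p x t)) + c j * φ j t := by
      rw [hφ j t]
      rw [← tsum_mul_left, ← Summable.tsum_add (hB j) ((hA j).mul_left (c j))]
      exact tsum_congr fun x => by rw [haff j x]; ring
    rw [this]
    ring
  rw [← key]
  exact hφderiv i t
end

section
/- Let c₁, c₂ > 0 and T > 0. Define λ₁(t) = 1 − exp(−c₂(T − t)), λ₂(t) = (1 − exp(−c₂(T − t)))⁻¹, and m(t) = (c₁/c₂) · (1 − exp(−c₂(T − t))) · (1 − exp(−c₂ t)). Then m(0) = 0, m(T) = 0, and for every t ∈ [0, T), m is differentiable at t with m′(t) = λ₁(t) · c₁ − λ₂(t) · c₂ · m(t). -/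
/-- For the linear birth–death process conditioned on `X(0)=0` and `X(T)=0`, the
posterior mean `m(t) = (c₁/c₂)(1−e^{−c₂(T−t)})(1−e^{−c₂ t})` vanishes at the
endpoints and solves the moment equation
`m′(t) = λ₁(t) c₁ − λ₂(t) c₂ m(t)` with the posterior scaling factors
`λ₁(t) = 1 − e^{−c₂(T−t)}` and `λ₂(t) = (1 − e^{−c₂(T−t)})⁻¹`. -/
theorem birth_death_posterior_mean_solves_moment_equation
    (c₁ c₂ T : ℝ) (hc₁ : 0 < c₁) (hc₂ : 0 < c₂) (hT : 0 < T)
    (lam₁ lam₂ m : ℝ → ℝ)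
    (hlam₁ : ∀ t : ℝ, lam₁ t = 1 - Real.exp (-c₂ * (T - t)))
    (hlam₂ : ∀ t : ℝ, lam₂ t = (1 - Real.exp (-c₂ * (T - t)))⁻¹)
    (hm : ∀ t : ℝ, m t = (c₁ / c₂) * (1 - Real.exp (-c₂ * (T - t)))
        * (1 - Real.exp (-c₂ * t))) :
    m 0 = 0 ∧ m T = 0 ∧
      ∀ t ∈ Set.Ico (0 : ℝ) T,
        HasDerivAt m (lam₁ t * c₁ - lam₂ t * c₂ * m t) t := by
  refine ⟨by simp [hm], by simp [hm], ?_⟩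
  intro t ht
  obtain ⟨ht0, htT⟩ := ht
  have hfun : m = fun s => (c₁ / c₂) * (1 - Real.exp (-c₂ * (T - s)))
      * (1 - Real.exp (-c₂ * s)) := funext hm
  -- derivative of exp(-c₂*(T-s)) at t is c₂ * exp(-c₂*(T-t))
  have h1 : HasDerivAt (fun s : ℝ => Real.exp (-c₂ * (T - s)))
      (c₂ * Real.exp (-c₂ * (T - t))) t := by
    have hlin : HasDerivAt (fun s : ℝ => -c₂ * (T - s)) c₂ t := by
      have := ((hasDerivAt_id t).const_sub T).const_mul (-c₂)
      simpa using this
    simpa [mul_comm] using hlin.exp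
  have h2 : HasDerivAt (fun s : ℝ => Real.exp (-c₂ * s))
      (-c₂ * Real.exp (-c₂ * t)) t := by
    have hlin : HasDerivAt (fun s : ℝ => -c₂ * s) (-c₂) t := by
      simpa using (hasDerivAt_id t).const_mul (-c₂)
    simpa [mul_comm] using hlin.exp
  have hA : HasDerivAt (fun s : ℝ => (c₁ / c₂) * (1 - Real.exp (-c₂ * (T - s))))
      ((c₁ / c₂) * (-(c₂ * Real.exp (-c₂ * (T - t))))) t :=
    ((h1.const_sub 1).const_mul (c₁ / c₂))
  have hB : HasDerivAt (fun s : ℝ => 1 - Real.exp (-c₂ * s))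
      (-(-c₂ * Real.exp (-c₂ * t))) t := h2.const_sub 1
  have hD := hA.mul hB
  rw [hfun]
  convert hD using 1
  · rfl
  · rfl
  · rfl
  have hne : 1 - Real.exp (-c₂ * (T - t)) ≠ 0 := by
    have : Real.exp (-c₂ * (T - t)) < 1 := by
      rw [Real.exp_lt_one_iff]
      nlinarith
    linarith
  rw [hlam₁, hlam₂]
  simp only []
  set a := Real.exp (-c₂ * (T - t)) with ha
  set b := Real.exp (-c₂ * t) with hb
  field_simp
  ring
end

section
/- Let c₁, c₂ > 0 and T > 0. Define σ : ℕ → ℝ → ℝ by σ(x, t) = exp( −(c₁/c₂) · (1 − exp(−c₂(T − t))) ) · (1 − exp(−c₂(T − t)))^x. Then: (i) for every x ∈ ℕ and every t < T, ∂_t σ(x,t) = − c₁ · ( σ(x+1, t) − σ(x, t) ) − c₂ · x · ( σ(x−1, t) − σ(x, t) ), where for x = 0 the second term vanishes since its coefficient c₂·x is zero; (ii) σ(0, T) = 1 and σ(x, T) = 0 for all x ≥ 1; (iii) for every x ∈ ℕ and t < T, σ(x+1, t)/σ(x, t) = 1 − exp(−c₂(T − t)). -/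
/-- The backward function `σ(x,t) = e^{−(c₁/c₂)(1−e^{−c₂(T−t)})}(1−e^{−c₂(T−t)})^x`
of the linear birth–death process (birth rate `c₁`, death rate `c₂ x`) solves the
backward equation with terminal condition the indicator of state `0`, and the
resulting posterior birth-rate scaling factor `σ(x+1,t)/σ(x,t) = 1 − e^{−c₂(T−t)}`
is independent of `x`. -/
theorem birth_death_backward_function
    (c₁ c₂ T : ℝ) (hc₁ : 0 < c₁) (hc₂ : 0 < c₂) (hT : 0 < T)
    (σ : ℕ → ℝ → ℝ)
    (hσ : ∀ x : ℕ, ∀ t : ℝ,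
      σ x t = Real.exp (-(c₁ / c₂) * (1 - Real.exp (-c₂ * (T - t))))
        * (1 - Real.exp (-c₂ * (T - t))) ^ x) :
    (∀ x : ℕ, ∀ t : ℝ, t < T →
        HasDerivAt (σ x)
          (-c₁ * (σ (x + 1) t - σ x t) - c₂ * x * (σ (x - 1) t - σ x t)) t)
      ∧ (σ 0 T = 1 ∧ ∀ x : ℕ, 1 ≤ x → σ x T = 0)
      ∧ (∀ x : ℕ, ∀ t : ℝ, t < T →
          σ (x + 1) t / σ x t = 1 - Real.exp (-c₂ * (T - t))) := by
  refine ⟨?_, ⟨?_, ?_⟩, ?_⟩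
  · intro x t ht
    have hfun : σ x = fun t => Real.exp (-(c₁ / c₂) * (1 - Real.exp (-c₂ * (T - t))))
        * (1 - Real.exp (-c₂ * (T - t))) ^ x := funext (hσ x)
    rw [hfun]
    have hlin : HasDerivAt (fun s : ℝ => -c₂ * (T - s)) c₂ t := by
      have := ((hasDerivAt_id t).const_sub T).const_mul (-c₂)
      simpa using this
    have hE : HasDerivAt (fun s : ℝ => Real.exp (-c₂ * (T - s)))
        (Real.exp (-c₂ * (T - t)) * c₂) t := hlin.exp
    have hu : HasDerivAt (fun s : ℝ => 1 - Real.exp (-c₂ * (T - s)))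
        (-(Real.exp (-c₂ * (T - t)) * c₂)) t := hE.const_sub 1
    have hf : HasDerivAt (fun s : ℝ =>
        Real.exp (-(c₁ / c₂) * (1 - Real.exp (-c₂ * (T - s)))))
        (Real.exp (-(c₁ / c₂) * (1 - Real.exp (-c₂ * (T - t)))) *
          (-(c₁ / c₂) * -(Real.exp (-c₂ * (T - t)) * c₂))) t :=
      (hu.const_mul (-(c₁ / c₂))).exp
    have hg : HasDerivAt (fun s : ℝ => (1 - Real.exp (-c₂ * (T - s))) ^ x)
        ((x : ℝ) * (1 - Real.exp (-c₂ * (T - t))) ^ (x - 1) *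
          -(Real.exp (-c₂ * (T - t)) * c₂)) t := hu.pow x
    have hprod := hf.mul hg
    refine hprod.congr_deriv (Eq.symm ?_)
    set e := Real.exp (-(c₁ / c₂) * (1 - Real.exp (-c₂ * (T - t)))) with he
    set E := Real.exp (-c₂ * (T - t)) with hEdef
    rcases x with _ | n
    · simp only [hσ, Nat.cast_zero, Nat.zero_sub, pow_zero, pow_one, ← he, ← hEdef]
      field_simp
      ring
    · simp only [hσ, Nat.add_sub_cancel, Nat.cast_add, Nat.cast_one, ← he, ← hEdef]
      field_simp
      ring
  · simp [hσ]
  · intro x hx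
    simp [hσ, zero_pow (by omega : x ≠ 0)]
  · intro x t ht
    have he : Real.exp (-(c₁ / c₂) * (1 - Real.exp (-c₂ * (T - t)))) ≠ 0 :=
      Real.exp_ne_zero _
    have hE1 : Real.exp (-c₂ * (T - t)) < 1 := by
      rw [Real.exp_lt_one_iff]
      nlinarith
    have hu : (1 - Real.exp (-c₂ * (T - t))) ≠ 0 := by linarith
    have hpow : (1 - Real.exp (-c₂ * (T - t))) ^ x ≠ 0 := pow_ne_zero _ hu
    rw [hσ, hσ, pow_succ,
      show Real.exp (-(c₁ / c₂) * (1 - Real.exp (-c₂ * (T - t)))) *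
          ((1 - Real.exp (-c₂ * (T - t))) ^ x * (1 - Real.exp (-c₂ * (T - t)))) =
        (Real.exp (-(c₁ / c₂) * (1 - Real.exp (-c₂ * (T - t)))) *
          (1 - Real.exp (-c₂ * (T - t))) ^ x) * (1 - Real.exp (-c₂ * (T - t))) from by ring]
    exact mul_div_cancel_left₀ _ (mul_ne_zero he hpow)
end
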